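/- arXiv:1310.8318 — 3 statements merged into one kernel-verified Lean document; each statement's English description precedes it below -/
import Mathlib

section
/- Let A be a real symmetric 2n×2n matrix such that the Hamiltonian matrix JA is diagonalizable with purely imaginary spectrum (linearly stable), and suppose A is invertible. Then the number of negative eigenvalues of A (counted with multiplicity) is even. -/
open Matrix Polynomial

/-- The standard complex structure on `ℝ^{2n}`, in block form `(0, -I; I, 0)`. -/
noncomputable def Jmat (n : ℕ) : Matrix (Fin n ⊕ Fin n) (Fin n ⊕ Fin n) ℝ :=
  Matrix.fromBlocks 0 (-1) 1 0

/-- The Morse index: the number of negative eigenvalues, counted with algebraic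
multiplicity. -/
noncomputable def morseIndex {m : Type*} [Fintype m] [DecidableEq m]
    (A : Matrix m m ℝ) : ℕ :=
  Multiset.card (A.charpoly.roots.filter fun x => x < 0)

section Aux

variable {m : Type*} [Fintype m] [DecidableEq m] {R : Type*} [CommRing R]

lemma aux_det_Jmat (n : ℕ) : (Jmat n).det = 1 := by
  set B1 : Matrix (Fin n ⊕ Fin n) (Fin n ⊕ Fin n) ℝ := Matrix.fromBlocks 1 1 0 1 with hB1
  set B2 : Matrix (Fin n ⊕ Fin n) (Fin n ⊕ Fin n) ℝ := Matrix.fromBlocks 1 0 (-1) 1 with hB2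
  have h0 : B1 * B2 * B1 = Matrix.fromBlocks 0 1 (-1) 0 := by
    rw [hB1, hB2]
    simp [Matrix.fromBlocks_multiply]
  have h1 : Jmat n = -(B1 * B2 * B1) := by
    rw [h0]
    simp [Jmat, Matrix.fromBlocks_neg]
  rw [h1, Matrix.det_neg, Matrix.det_mul, Matrix.det_mul, hB1, hB2,
    Matrix.det_fromBlocks_zero₂₁, Matrix.det_fromBlocks_zero₁₂]
  simp [Fintype.card_sum]

lemma aux_charpoly_conj (P M Q : Matrix m m R) (h : P * Q = 1) :
    (P * M * Q).charpoly = M.charpoly := by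
  set f : Matrix m m R →+* Matrix m m R[X] := (C : R →+* R[X]).mapMatrix with hf
  have h1 : f P * f Q = 1 := by rw [← _root_.map_mul, h, _root_.map_one]
  have h2 : charmatrix (P * M * Q) = f P * charmatrix M * f Q := by
    unfold charmatrix
    rw [Matrix.mul_sub, Matrix.sub_mul]
    congr 1
    · have hd : (Matrix.scalar m (X : R[X])) = (X : R[X]) • (1 : Matrix m m R[X]) := by
        rw [Matrix.scalar_apply, Matrix.smul_eq_diagonal_mul, Matrix.mul_one]
      rw [hd, mul_smul_comm, mul_one, smul_mul_assoc, h1]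
    · rw [hf, ← _root_.map_mul, ← _root_.map_mul]
  unfold Matrix.charpoly
  have h3 : (f P).det * (f Q).det = 1 := by rw [← Matrix.det_mul, h1, Matrix.det_one]
  calc (charmatrix (P * M * Q)).det
      = (f P).det * (charmatrix M).det * (f Q).det := by rw [h2, Matrix.det_mul, Matrix.det_mul]
    _ = (charmatrix M).det * ((f P).det * (f Q).det) := by ring
    _ = (charmatrix M).det := by rw [h3, mul_one]

lemma aux_charpoly_diagonal (d : m → R) :
    (Matrix.diagonal d).charpoly = ∏ i, (X - C (d i)) := by
  have h : charmatrix (Matrix.diagonal d) = Matrix.diagonal fun i => X - C (d i) := by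
    ext i j
    by_cases hij : i = j
    · subst hij; simp [charmatrix_apply_eq]
    · simp [charmatrix_apply_ne _ _ _ hij, Matrix.diagonal_apply_ne _ hij,
        Matrix.diagonal_apply_ne d hij]
  rw [Matrix.charpoly, h, Matrix.det_diagonal]

lemma aux_sign (s : Multiset ℝ) (h : ∀ x ∈ s, x < 0) :
    0 < (-1 : ℝ) ^ (Multiset.card s) * s.prod := by
  induction s using Multiset.induction with
  | empty => simp
  | cons a s ih =>
    have ha : a < 0 := h a (Multiset.mem_cons_self a s)
    have hs := ih fun x hx => h x (Multiset.mem_cons_of_mem hx)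
    rw [Multiset.prod_cons, Multiset.card_cons, pow_succ]
    nlinarith

lemma aux_multiset_even (s : Multiset ℝ) (h : ∀ x ∈ s, x < 0) (hp : 0 < s.prod) :
    Even (Multiset.card s) := by
  rcases Nat.even_or_odd (Multiset.card s) with he | ho
  · exact he
  · exfalso
    have := aux_sign s h
    rw [ho.neg_one_pow] at this
    nlinarith

end Aux

/-- If `A` is real symmetric and invertible, and `JA` is linearly stable (purely imaginary
spectrum and diagonalisable over `ℂ`), then the number of negative eigenvalues of `A` is
even. -/
theorem morseIndex_even_of_linearly_stable (n : ℕ)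
    (A : Matrix (Fin n ⊕ Fin n) (Fin n ⊕ Fin n) ℝ)
    (hA : A.IsSymm) (hinv : IsUnit A.det)
    (hspec : ∀ lam : ℂ, ((Jmat n * A).map Complex.ofReal).charpoly.IsRoot lam → lam.re = 0)
    (hdiag : ∃ P D : Matrix (Fin n ⊕ Fin n) (Fin n ⊕ Fin n) ℂ, IsUnit P.det ∧ D.IsDiag ∧
      (Jmat n * A).map Complex.ofReal = P * D * P⁻¹) :
    Even (morseIndex A) := by
  classical
  have hH : A.IsHermitian := by
    ext i j
    rw [Matrix.conjTranspose_apply, star_trivial, ← Matrix.transpose_apply A j i, hA]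
  -- charpoly of A splits with real eigenvalues
  have hU := (Matrix.mem_unitaryGroup_iff).mp hH.eigenvectorUnitary.2
  have hcp : A.charpoly = ∏ i, (X - C (hH.eigenvalues i)) := by
    conv_lhs => rw [hH.spectral_theorem, Unitary.conjStarAlgAut_apply]
    rw [aux_charpoly_conj _ _ _ hU, aux_charpoly_diagonal]
    simp
  have hsplits : A.charpoly.Splits := by
    rw [hcp]
    exact Splits.prod fun i _ => Splits.X_sub_C _
  have hdet_roots : A.det = A.charpoly.roots.prod :=
    Matrix.det_eq_prod_roots_charpoly_of_splits hsplits
  -- determinant of A is positive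
  set p := (Jmat n * A).charpoly with hp
  have hmono := (Jmat n * A).charpoly_monic
  have hp0 : p.eval 0 = A.det := by
    have hd := Matrix.det_eq_sign_charpoly_coeff (Jmat n * A)
    have hcard : Fintype.card (Fin n ⊕ Fin n) = n + n := by simp [Fintype.card_sum]
    rw [hcard, Even.neg_one_pow ⟨n, rfl⟩, one_mul] at hd
    rw [coeff_zero_eq_eval_zero] at hd
    rw [← hd, Matrix.det_mul, aux_det_Jmat, one_mul]
  have hAne : A.det ≠ 0 := hinv.ne_zero
  have hnoroot : ∀ t : ℝ, p.eval t ≠ 0 := by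
    intro t ht
    have hroot : ((Jmat n * A).map Complex.ofReal).charpoly.IsRoot (t : ℂ) := by
      have : (Jmat n * A).map Complex.ofReal = (Jmat n * A).map Complex.ofRealHom := rfl
      rw [this, Matrix.charpoly_map]
      rw [IsRoot, eval_map]
      show eval₂ Complex.ofRealHom (Complex.ofRealHom t) p = 0
      rw [eval₂_at_apply, ht, map_zero]
    have h0 := hspec t hroot
    rw [Complex.ofReal_re] at h0
    subst h0
    rw [hp0] at ht
    exact hAne ht
  have hdetpos : 0 < A.det := by
    rcases Nat.eq_zero_or_pos n with h0 | hn
    · subst h0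
      rw [Matrix.det_isEmpty]
      norm_num
    · have hdeg : 0 < p.degree := by
        rw [hp, Matrix.charpoly_degree_eq_dim]
        have : Fintype.card (Fin n ⊕ Fin n) = n + n := by simp [Fintype.card_sum]
        rw [this]
        exact_mod_cast Nat.add_pos_left hn n
      have htend := Polynomial.tendsto_atTop_of_leadingCoeff_nonneg p hdeg
        (by rw [hmono.leadingCoeff]; norm_num)
      obtain ⟨T, hT0, hTpos⟩ : ∃ T : ℝ, 0 ≤ T ∧ 0 < p.eval T := by
        obtain ⟨T, h⟩ := ((htend.eventually_gt_atTop 0).and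
          (Filter.eventually_ge_atTop (0 : ℝ))).exists
        exact ⟨T, h.2, h.1⟩
      rw [← hp0]
      rcases lt_trichotomy (p.eval 0) 0 with hneg | hz | hpos
      · exfalso
        have hmem : (0 : ℝ) ∈ Set.Icc (p.eval 0) (p.eval T) := ⟨le_of_lt hneg, le_of_lt hTpos⟩
        obtain ⟨x, _, hx⟩ := intermediate_value_Icc hT0 p.continuous.continuousOn hmem
        exact hnoroot x hx
      · exact absurd hz (hnoroot 0)
      · exact hpos
  -- conclusion
  unfold morseIndex
  have hsplit := Multiset.filter_add_not (fun x => x < 0) A.charpoly.roots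
  have hprod : (A.charpoly.roots.filter fun x => x < 0).prod *
      (A.charpoly.roots.filter (fun x => ¬ x < 0)).prod = A.charpoly.roots.prod := by
    rw [← Multiset.prod_add, hsplit]
  have hposn : 0 ≤ (A.charpoly.roots.filter (fun x => ¬ x < 0)).prod :=
    Multiset.prod_nonneg fun x hx => le_of_not_gt (Multiset.mem_filter.mp hx).2
  have hnegpos : 0 < (A.charpoly.roots.filter fun x => x < 0).prod := by
    rw [hdet_roots] at hdetpos
    nlinarith [hprod, hposn, hdetpos]
  exact aux_multiset_even _ (fun x hx => (Multiset.mem_filter.mp hx).2) hnegpos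
end

section
/- Let S be a complex symplectic matrix (S† J S = J) and λ an eigenvalue of S with |λ| ≠ 1 of algebraic multiplicity d. Then the Hermitian form g(v,w) = ⟨iJ v, w⟩ restricted to the sum of the generalized eigenspaces of λ and of (conjugate λ)⁻¹ has a d-dimensional isotropic subspace; in particular g has zero signature on that 2d-dimensional subspace. -/
open Matrix Polynomial

/-- The standard complex structure on `ℂ^{2n}`, in block form `(0, -I; I, 0)`. -/
noncomputable def Jc (n : ℕ) : Matrix (Fin n ⊕ Fin n) (Fin n ⊕ Fin n) ℂ :=
  Matrix.fromBlocks 0 (-1) 1 0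

/-- The Krein Hermitian form `g(v, w) = ⟨iJ v, w⟩` on `ℂ^{2n}` (with the standard Hermitian
inner product, conjugate-linear in the first variable). -/
noncomputable def kreinForm (n : ℕ) (v w : (Fin n ⊕ Fin n) → ℂ) : ℂ :=
  star ((Complex.I • Jc n).mulVec v) ⬝ᵥ w

/-- The generalized eigenspace `E_λ = ∪_j ker (S - λ I)^j`. -/
noncomputable def genEig (n : ℕ) (S : Matrix (Fin n ⊕ Fin n) (Fin n ⊕ Fin n) ℂ) (lam : ℂ) :
    Submodule ℂ ((Fin n ⊕ Fin n) → ℂ) :=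
  ⨆ j : ℕ, LinearMap.ker (Matrix.toLin' (S - lam • 1) ^ j)

/-- The maximal dimension of a subspace of `F` on which the Krein form is positive
definite. -/
noncomputable def posIndex (n : ℕ) (F : Submodule ℂ ((Fin n ⊕ Fin n) → ℂ)) : ℕ :=
  sSup {k | ∃ W : Submodule ℂ ((Fin n ⊕ Fin n) → ℂ), W ≤ F ∧ Module.finrank ℂ W = k ∧
    ∀ v ∈ W, v ≠ 0 → 0 < (kreinForm n v v).re}

/-- The maximal dimension of a subspace of `F` on which the Krein form is negative
definite. -/
noncomputable def negIndex (n : ℕ) (F : Submodule ℂ ((Fin n ⊕ Fin n) → ℂ)) : ℕ :=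
  sSup {k | ∃ W : Submodule ℂ ((Fin n ⊕ Fin n) → ℂ), W ≤ F ∧ Module.finrank ℂ W = k ∧
    ∀ v ∈ W, v ≠ 0 → (kreinForm n v v).re < 0}

section KreinAux

/-! ### Auxiliary lemmas about the Krein form -/

lemma Jc_conjTranspose (n : ℕ) : (Complex.I • Jc n)ᴴ = Complex.I • Jc n := by
  rw [conjTranspose_smul]
  have : (Jc n)ᴴ = -(Jc n) := by
    rw [Jc, Matrix.fromBlocks_conjTranspose]
    simp [Matrix.fromBlocks_neg]
  rw [this, Complex.star_def, Complex.conj_I, neg_smul, smul_neg, neg_neg]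

lemma krein_inv (n : ℕ) (S : Matrix (Fin n ⊕ Fin n) (Fin n ⊕ Fin n) ℂ)
    (hS : Sᴴ * Jc n * S = Jc n) (v w : (Fin n ⊕ Fin n) → ℂ) :
    kreinForm n (S *ᵥ v) (S *ᵥ w) = kreinForm n v w := by
  have h2 : Sᴴ * (Complex.I • Jc n) * S = Complex.I • Jc n := by
    rw [Matrix.mul_smul, Matrix.smul_mul, hS]
  unfold kreinForm
  rw [Matrix.mulVec_mulVec, star_mulVec, star_mulVec, dotProduct_mulVec,
    vecMul_vecMul, conjTranspose_mul, Matrix.mul_assoc, ← Matrix.mul_assoc,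
    Jc_conjTranspose, h2, ← dotProduct_mulVec]

lemma krein_add_left (n : ℕ) (v v' w : (Fin n ⊕ Fin n) → ℂ) :
    kreinForm n (v + v') w = kreinForm n v w + kreinForm n v' w := by
  simp [kreinForm, Matrix.mulVec_add, add_dotProduct]

lemma krein_add_right (n : ℕ) (v w w' : (Fin n ⊕ Fin n) → ℂ) :
    kreinForm n v (w + w') = kreinForm n v w + kreinForm n v w' := by
  simp [kreinForm, dotProduct_add]

lemma krein_smul_left (n : ℕ) (c : ℂ) (v w : (Fin n ⊕ Fin n) → ℂ) :
    kreinForm n (c • v) w = starRingEnd ℂ c * kreinForm n v w := by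
  simp [kreinForm, Matrix.mulVec_smul, smul_dotProduct, Complex.star_def]

lemma krein_smul_right (n : ℕ) (c : ℂ) (v w : (Fin n ⊕ Fin n) → ℂ) :
    kreinForm n v (c • w) = c * kreinForm n v w := by
  simp [kreinForm, dotProduct_smul]

lemma krein_zero_left (n : ℕ) (w : (Fin n ⊕ Fin n) → ℂ) : kreinForm n 0 w = 0 := by
  simp [kreinForm]

lemma krein_zero_right (n : ℕ) (v : (Fin n ⊕ Fin n) → ℂ) : kreinForm n v 0 = 0 := by
  simp [kreinForm]

lemma krein_sub_left (n : ℕ) (v v' w : (Fin n ⊕ Fin n) → ℂ) :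
    kreinForm n (v - v') w = kreinForm n v w - kreinForm n v' w := by
  simp [kreinForm, Matrix.mulVec_sub, sub_dotProduct]

lemma krein_sub_right (n : ℕ) (v w w' : (Fin n ⊕ Fin n) → ℂ) :
    kreinForm n v (w - w') = kreinForm n v w - kreinForm n v w' := by
  simp [kreinForm, dotProduct_sub]

/-! ### Orthogonality of generalized eigenspaces -/

lemma krein_ortho_aux (n : ℕ) (S : Matrix (Fin n ⊕ Fin n) (Fin n ⊕ Fin n) ℂ)
    (hS : Sᴴ * Jc n * S = Jc n) (μ₁ μ₂ : ℂ) (h : starRingEnd ℂ μ₁ * μ₂ ≠ 1) :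
    ∀ m k l : ℕ, k + l ≤ m → ∀ v w : (Fin n ⊕ Fin n) → ℂ,
      ((Matrix.toLin' (S - μ₁ • 1)) ^ k) v = 0 → ((Matrix.toLin' (S - μ₂ • 1)) ^ l) w = 0 →
      kreinForm n v w = 0 := by
  intro m
  induction m with
  | zero =>
    intro k l hkl v w hv hw
    obtain ⟨rfl, rfl⟩ : k = 0 ∧ l = 0 := by omega
    simp only [pow_zero, Module.End.one_apply] at hv
    rw [hv, krein_zero_left]
  | succ m ih =>
    intro k l hkl v w hv hw
    rcases k with _ | k'
    · simp only [pow_zero, Module.End.one_apply] at hv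
      rw [hv, krein_zero_left]
    rcases l with _ | l'
    · simp only [pow_zero, Module.End.one_apply] at hw
      rw [hw, krein_zero_right]
    set v' : (Fin n ⊕ Fin n) → ℂ := (S - μ₁ • 1) *ᵥ v with hv'def
    set w' : (Fin n ⊕ Fin n) → ℂ := (S - μ₂ • 1) *ᵥ w with hw'def
    have hv' : ((Matrix.toLin' (S - μ₁ • 1)) ^ k') v' = 0 := by
      rw [pow_succ, Module.End.mul_apply] at hv
      rwa [hv'def, ← Matrix.toLin'_apply]
    have hw' : ((Matrix.toLin' (S - μ₂ • 1)) ^ l') w' = 0 := by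
      rw [pow_succ, Module.End.mul_apply] at hw
      rwa [hw'def, ← Matrix.toLin'_apply]
    have key₁ : S *ᵥ v = μ₁ • v + v' := by
      rw [hv'def, Matrix.sub_mulVec, Matrix.smul_mulVec, Matrix.one_mulVec]
      abel
    have key₂ : S *ᵥ w = μ₂ • w + w' := by
      rw [hw'def, Matrix.sub_mulVec, Matrix.smul_mulVec, Matrix.one_mulVec]
      abel
    have z₁ : kreinForm n v w' = 0 := ih (k' + 1) l' (by omega) v w' hv hw'
    have z₂ : kreinForm n v' w = 0 := ih k' (l' + 1) (by omega) v' w hv' hw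
    have z₃ : kreinForm n v' w' = 0 := ih k' l' (by omega) v' w' hv' hw'
    have expand : kreinForm n v w = starRingEnd ℂ μ₁ * μ₂ * kreinForm n v w := by
      conv_lhs => rw [← krein_inv n S hS v w, key₁, key₂]
      rw [krein_add_left, krein_add_right, krein_add_right, krein_smul_left,
        krein_smul_left, krein_smul_right, krein_smul_right, z₁, z₂, z₃]
      ring
    have hfac : (1 - starRingEnd ℂ μ₁ * μ₂) * kreinForm n v w = 0 := by
      rw [sub_mul, one_mul]
      linear_combination expand
    rcases mul_eq_zero.mp hfac with h0 | h0
    · exact absurd (by linear_combination -h0) h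
    · exact h0

lemma toLin'_sub_smul_one {m : Type*} [Fintype m] [DecidableEq m]
    (S : Matrix m m ℂ) (μ : ℂ) :
    Matrix.toLin' (S - μ • 1) = Matrix.toLin' S - μ • (1 : Module.End ℂ (m → ℂ)) := by
  ext v
  simp [Matrix.toLin'_apply, Matrix.sub_mulVec, Matrix.smul_mulVec, Matrix.one_mulVec]

lemma genEig_eq_max (n : ℕ) (S : Matrix (Fin n ⊕ Fin n) (Fin n ⊕ Fin n) ℂ) (μ : ℂ) :
    genEig n S μ = Module.End.maxGenEigenspace (Matrix.toLin' S) μ := by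
  rw [← Module.End.iSup_genEigenspace_eq]
  unfold genEig
  congr 1
  funext j
  rw [Module.End.genEigenspace_nat, toLin'_sub_smul_one]

lemma mem_genEig_iff (n : ℕ) (S : Matrix (Fin n ⊕ Fin n) (Fin n ⊕ Fin n) ℂ) (μ : ℂ)
    (v : (Fin n ⊕ Fin n) → ℂ) :
    v ∈ genEig n S μ ↔ ∃ k : ℕ, ((Matrix.toLin' (S - μ • 1)) ^ k) v = 0 := by
  rw [genEig_eq_max, Module.End.mem_maxGenEigenspace]
  simp_rw [← toLin'_sub_smul_one]

lemma krein_ortho_genEig (n : ℕ) (S : Matrix (Fin n ⊕ Fin n) (Fin n ⊕ Fin n) ℂ)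
    (hS : Sᴴ * Jc n * S = Jc n) {μ₁ μ₂ : ℂ} (h : starRingEnd ℂ μ₁ * μ₂ ≠ 1) :
    ∀ v ∈ genEig n S μ₁, ∀ w ∈ genEig n S μ₂, kreinForm n v w = 0 := by
  intro v hv w hw
  obtain ⟨k, hk⟩ := (mem_genEig_iff n S μ₁ v).mp hv
  obtain ⟨l, hl⟩ := (mem_genEig_iff n S μ₂ w).mp hw
  exact krein_ortho_aux n S hS μ₁ μ₂ h (k + l) k l le_rfl v w hk hl

/-! ### Dimension of the generalized eigenspace -/

lemma charpoly_sub_smul_one {m : Type*} [Fintype m] [DecidableEq m]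
    (S : Matrix m m ℂ) (μ : ℂ) :
    (S - μ • 1).charpoly = S.charpoly.comp (X + C μ) := by
  rw [comp_eq_aeval, Matrix.charpoly, Matrix.charpoly, ← AlgHom.coe_toRingHom,
    RingHom.map_det]
  congr 1
  ext i j
  by_cases h : i = j
  · subst h
    simp [RingHom.mapMatrix_apply, Matrix.charmatrix_apply_eq, Matrix.sub_apply,
      Matrix.smul_apply, Matrix.one_apply_eq, map_sub, aeval_X, aeval_C]
    ring
  · simp [RingHom.mapMatrix_apply, Matrix.charmatrix_apply_ne _ _ _ h, Matrix.sub_apply,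
      Matrix.smul_apply, Matrix.one_apply_ne h, aeval_C]

lemma charpoly_toLin' {m : Type*} [Fintype m] [DecidableEq m] (M : Matrix m m ℂ) :
    (Matrix.toLin' M).charpoly = M.charpoly := by
  rw [← LinearMap.charpoly_toMatrix (Matrix.toLin' M) (Pi.basisFun ℂ m),
    LinearMap.toMatrix_eq_toMatrix', LinearMap.toMatrix'_toLin']

lemma finrank_genEig (n : ℕ) (S : Matrix (Fin n ⊕ Fin n) (Fin n ⊕ Fin n) ℂ) (lam : ℂ) :
    Module.finrank ℂ (genEig n S lam) = S.charpoly.rootMultiplicity lam := by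
  set φ := Matrix.toLin' (S - lam • 1) with hφ
  have h1 : genEig n S lam = Module.End.maxGenEigenspace φ 0 := by
    rw [← Module.End.iSup_genEigenspace_eq]
    unfold genEig
    congr 1
    funext j
    rw [Module.End.genEigenspace_nat]
    rw [zero_smul, sub_zero]
  rw [h1, LinearMap.finrank_maxGenEigenspace_zero_eq, _root_.charpoly_toLin', charpoly_sub_smul_one,
    Polynomial.rootMultiplicity_eq_natTrailingDegree]

/-! ### The swap lemma -/

lemma krein_swap (n : ℕ) (E₁ E₂ : Submodule ℂ ((Fin n ⊕ Fin n) → ℂ))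
    (hd : Disjoint E₁ E₂)
    (h₁ : ∀ v ∈ E₁, ∀ w ∈ E₁, kreinForm n v w = 0)
    (h₂ : ∀ v ∈ E₂, ∀ w ∈ E₂, kreinForm n v w = 0)
    (W : Submodule ℂ ((Fin n ⊕ Fin n) → ℂ)) (hW : W ≤ E₁ ⊔ E₂) :
    ∃ W' : Submodule ℂ ((Fin n ⊕ Fin n) → ℂ), W' ≤ E₁ ⊔ E₂ ∧
      Module.finrank ℂ W' = Module.finrank ℂ W ∧
      ∀ v ∈ W', v ≠ 0 → ∃ w ∈ W, w ≠ 0 ∧ kreinForm n v v = -kreinForm n w w := by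
  classical
  set V := (Fin n ⊕ Fin n) → ℂ
  set addL : V × V →ₗ[ℂ] V := LinearMap.fst ℂ V V + LinearMap.snd ℂ V V with haddL
  set subL : V × V →ₗ[ℂ] V := LinearMap.fst ℂ V V - LinearMap.snd ℂ V V with hsubL
  set D : Submodule ℂ (V × V) := (E₁.prod E₂) ⊓ (W.comap addL) with hD
  have hmemD : ∀ p ∈ D, p.1 ∈ E₁ ∧ p.2 ∈ E₂ ∧ p.1 + p.2 ∈ W := by
    rintro p ⟨⟨hp1, hp2⟩, hp3⟩
    exact ⟨hp1, hp2, hp3⟩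
  have hsub_inj : ∀ p ∈ D, subL p = 0 → p = 0 := by
    rintro ⟨x, y⟩ hp h0
    obtain ⟨hx, hy, -⟩ := hmemD _ hp
    have hxy : x = y := sub_eq_zero.mp h0
    have hx0 : x = 0 := hd.le_bot ⟨hx, hxy ▸ hy⟩
    have hy0 : y = 0 := hxy ▸ hx0
    simp [hx0, hy0, Prod.ext_iff]
  have hadd_inj : ∀ p ∈ D, addL p = 0 → p = 0 := by
    rintro ⟨x, y⟩ hp h0
    obtain ⟨hx, hy, -⟩ := hmemD _ hp
    have hxy : x = -y := eq_neg_of_add_eq_zero_left h0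
    have hx0 : x = 0 := hd.le_bot ⟨hx, hxy ▸ (E₂.neg_mem hy)⟩
    have hy0 : y = 0 := by
      have := hxy ▸ hx0
      simpa using this.symm
    simp [hx0, hy0, Prod.ext_iff]
  have hWD : W = D.map addL := by
    apply le_antisymm
    · intro w hw
      obtain ⟨x, hx, y, hy, rfl⟩ := Submodule.mem_sup.mp (hW hw)
      exact ⟨(x, y), ⟨⟨hx, hy⟩, hw⟩, rfl⟩
    · rintro w ⟨p, hp, rfl⟩
      exact (hmemD _ hp).2.2
  have hrank : ∀ (f : (V × V) →ₗ[ℂ] V), (∀ p ∈ D, f p = 0 → p = 0) →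
      Module.finrank ℂ (D.map f) = Module.finrank ℂ D := by
    intro f hf
    have hinj : Function.Injective (f.domRestrict D) := by
      rw [← LinearMap.ker_eq_bot]
      rw [Submodule.eq_bot_iff]
      rintro ⟨p, hp⟩ h0
      exact Subtype.ext (hf p hp h0)
    rw [← LinearMap.range_domRestrict]
    exact LinearMap.finrank_range_of_inj hinj
  refine ⟨D.map subL, ?_, ?_, ?_⟩
  · rintro v ⟨p, hp, rfl⟩
    obtain ⟨hx, hy, -⟩ := hmemD _ hp
    exact Submodule.sub_mem _ ((le_sup_left : E₁ ≤ E₁ ⊔ E₂) hx)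
      ((le_sup_right : E₂ ≤ E₁ ⊔ E₂) hy)
  · rw [hrank subL hsub_inj, hWD, hrank addL hadd_inj]
  · rintro v ⟨⟨x, y⟩, hp, rfl⟩ hv
    obtain ⟨hx, hy, hw⟩ := hmemD _ hp
    refine ⟨x + y, hw, ?_, ?_⟩
    · intro h0
      have hp0 : (x, y) = (0 : V × V) := hadd_inj (x, y) hp h0
      exact hv (by rw [hp0]; exact map_zero subL)
    · have e1 : subL (x, y) = x - y := rfl
      rw [e1, krein_sub_left, krein_sub_right, krein_sub_right,
        krein_add_left, krein_add_right, krein_add_right,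
        h₁ x hx x hx, h₂ y hy y hy]
      ring

/-! ### Degenerate index lemma -/

lemma sSup_index_set (n : ℕ) (F : Submodule ℂ ((Fin n ⊕ Fin n) → ℂ)) (P : ℂ → Prop)
    (hP0 : ¬ P 0) (hvan : ∀ v ∈ F, kreinForm n v v = 0) :
    sSup {k | ∃ W : Submodule ℂ ((Fin n ⊕ Fin n) → ℂ), W ≤ F ∧ Module.finrank ℂ W = k ∧
      ∀ v ∈ W, v ≠ 0 → P (kreinForm n v v)} = 0 := by
  have hset : {k | ∃ W : Submodule ℂ ((Fin n ⊕ Fin n) → ℂ), W ≤ F ∧ Module.finrank ℂ W = k ∧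
      ∀ v ∈ W, v ≠ 0 → P (kreinForm n v v)} = {0} := by
    ext k
    simp only [Set.mem_setOf_eq, Set.mem_singleton_iff]
    constructor
    · rintro ⟨W, hWF, rfl, hpos⟩
      by_contra hk
      have hWne : W ≠ ⊥ := by
        intro hb
        rw [hb] at hk
        exact hk (by simp)
      obtain ⟨v, hvW, hv0⟩ := Submodule.exists_mem_ne_zero_of_ne_bot hWne
      have := hpos v hvW hv0
      rw [hvan v (hWF hvW)] at this
      exact hP0 this
    · rintro rfl
      exact ⟨⊥, bot_le, by simp, fun v hv hv0 => absurd ((Submodule.mem_bot ℂ).mp hv) hv0⟩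
  rw [hset, csSup_singleton]

end KreinAux

/-- If `λ` is an eigenvalue of the complex symplectic matrix `S` with `|λ| ≠ 1` and algebraic
multiplicity `d`, then the Krein form restricted to `E_λ ⊕ E_{(conj λ)⁻¹}` has a
`d`-dimensional isotropic subspace; in particular it has zero signature there. -/
theorem krein_form_zero_signature_off_circle (n : ℕ)
    (S : Matrix (Fin n ⊕ Fin n) (Fin n ⊕ Fin n) ℂ)
    (hS : Sᴴ * Jc n * S = Jc n) (lam : ℂ)
    (hlam : S.charpoly.IsRoot lam) (habs : ‖lam‖ ≠ 1) :
    ∃ W : Submodule ℂ ((Fin n ⊕ Fin n) → ℂ),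
      W ≤ genEig n S lam ⊔ genEig n S ((starRingEnd ℂ lam)⁻¹) ∧
      Module.finrank ℂ W = S.charpoly.rootMultiplicity lam ∧
      (∀ v ∈ W, ∀ w ∈ W, kreinForm n v w = 0) ∧
      posIndex n (genEig n S lam ⊔ genEig n S ((starRingEnd ℂ lam)⁻¹)) =
        negIndex n (genEig n S lam ⊔ genEig n S ((starRingEnd ℂ lam)⁻¹)) := by
  classical
  set μ₂ : ℂ := (starRingEnd ℂ lam)⁻¹ with hμ₂
  have habs2 : starRingEnd ℂ lam * lam ≠ 1 := by
    intro h
    apply habs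
    have h' := congrArg (‖·‖) h
    simp only [norm_mul, Complex.norm_conj, norm_one] at h'
    nlinarith [norm_nonneg lam]
  have h₁ : ∀ v ∈ genEig n S lam, ∀ w ∈ genEig n S lam, kreinForm n v w = 0 :=
    krein_ortho_genEig n S hS habs2
  refine ⟨genEig n S lam, le_sup_left, finrank_genEig n S lam, h₁, ?_⟩
  by_cases hlam0 : lam = 0
  · have hμ0 : μ₂ = lam := by rw [hμ₂, hlam0]; simp
    have hF : genEig n S lam ⊔ genEig n S μ₂ = genEig n S lam := by rw [hμ0, sup_idem]
    have hvan : ∀ v ∈ genEig n S lam ⊔ genEig n S μ₂, kreinForm n v v = 0 := by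
      rw [hF]; intro v hv; exact h₁ v hv v hv
    have e1 : posIndex n (genEig n S lam ⊔ genEig n S μ₂) = 0 := by
      unfold posIndex
      exact sSup_index_set n _ (fun c => 0 < c.re) (by norm_num) hvan
    have e2 : negIndex n (genEig n S lam ⊔ genEig n S μ₂) = 0 := by
      unfold negIndex
      exact sSup_index_set n _ (fun c => c.re < 0) (by norm_num) hvan
    rw [e1, e2]
  · have hconj0 : starRingEnd ℂ lam ≠ 0 := by
      simpa using hlam0
    have hne : lam ≠ μ₂ := by
      intro h
      apply habs2
      rw [hμ₂] at h
      have h2 : starRingEnd ℂ lam * lam = starRingEnd ℂ lam * (starRingEnd ℂ lam)⁻¹ := by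
        rw [← h]
      rw [h2]
      exact mul_inv_cancel₀ hconj0
    have hdisj : Disjoint (genEig n S lam) (genEig n S μ₂) := by
      rw [genEig_eq_max, genEig_eq_max]
      exact Module.End.disjoint_genEigenspace _ hne ⊤ ⊤
    have habs2' : starRingEnd ℂ μ₂ * μ₂ ≠ 1 := by
      rw [hμ₂, map_inv₀, Complex.conj_conj, ← mul_inv]
      intro h
      apply habs2
      rw [mul_comm]
      exact inv_eq_one.mp h
    have h₂ : ∀ v ∈ genEig n S μ₂, ∀ w ∈ genEig n S μ₂, kreinForm n v w = 0 :=
      krein_ortho_genEig n S hS habs2'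
    have hsets : {k | ∃ W : Submodule ℂ ((Fin n ⊕ Fin n) → ℂ),
          W ≤ genEig n S lam ⊔ genEig n S μ₂ ∧ Module.finrank ℂ W = k ∧
          ∀ v ∈ W, v ≠ 0 → 0 < (kreinForm n v v).re} =
        {k | ∃ W : Submodule ℂ ((Fin n ⊕ Fin n) → ℂ),
          W ≤ genEig n S lam ⊔ genEig n S μ₂ ∧ Module.finrank ℂ W = k ∧
          ∀ v ∈ W, v ≠ 0 → (kreinForm n v v).re < 0} := by
      ext k
      simp only [Set.mem_setOf_eq]
      constructor
      · rintro ⟨W, hWF, rfl, hpos⟩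
        obtain ⟨W', hW'F, hfr, hswap⟩ := krein_swap n _ _ hdisj h₁ h₂ W hWF
        refine ⟨W', hW'F, hfr, fun v hv hv0 => ?_⟩
        obtain ⟨w, hwW, hw0, heq⟩ := hswap v hv hv0
        have hw := hpos w hwW hw0
        rw [heq, Complex.neg_re]
        linarith
      · rintro ⟨W, hWF, rfl, hneg⟩
        obtain ⟨W', hW'F, hfr, hswap⟩ := krein_swap n _ _ hdisj h₁ h₂ W hWF
        refine ⟨W', hW'F, hfr, fun v hv hv0 => ?_⟩
        obtain ⟨w, hwW, hw0, heq⟩ := hswap v hv hv0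
        have hw := hneg w hwW hw0
        rw [heq, Complex.neg_re]
        linarith
    unfold posIndex negIndex
    rw [hsets]
end

section
/- For the α-homogeneous n-body potential, the trace of M⁻¹ D²U_α(x̄) equals α² ∑_{i<j} (m_i + m_j)/|x̄_i − x̄_j|^{α+2}; for the logarithmic potential the trace of M⁻¹ D²U_log(x̄) equals 0. -/
open Finset

/-- The Euclidean distance between the planar positions of bodies `i` and `j`. -/
noncomputable def dist2 {n : ℕ} (q : Fin n → Fin 2 → ℝ) (i j : Fin n) : ℝ :=
  Real.sqrt ((q i 0 - q j 0) ^ 2 + (q i 1 - q j 1) ^ 2)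

/-- The `α`-homogeneous `n`-body potential `U_α(q) = ∑_{i<j} m_i m_j / |q_i - q_j|^α`. -/
noncomputable def Ualpha {n : ℕ} (m : Fin n → ℝ) (α : ℝ) (q : Fin n → Fin 2 → ℝ) : ℝ :=
  ∑ i : Fin n, ∑ j ∈ Finset.univ.filter (fun j => i < j),
    m i * m j / Real.rpow (dist2 q i j) α

/-- The logarithmic `n`-body potential `U_log(q) = -∑_{i<j} m_i m_j log |q_i - q_j|`. -/
noncomputable def Ulog {n : ℕ} (m : Fin n → ℝ) (q : Fin n → Fin 2 → ℝ) : ℝ :=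
  -∑ i : Fin n, ∑ j ∈ Finset.univ.filter (fun j => i < j),
    m i * m j * Real.log (dist2 q i j)

/-- The standard basis vector of `ℝ^{2n} = (ℝ²)ⁿ` in slot `(i, c)`. -/
def basisVec {n : ℕ} (i : Fin n) (c : Fin 2) : Fin n → Fin 2 → ℝ :=
  fun k d => if k = i ∧ d = c then 1 else 0

namespace NBodyTrace

open Topology

variable {n : ℕ}

/-- Squared distance between bodies `i` and `j`. -/
def sq2 (i j : Fin n) (q : Fin n → Fin 2 → ℝ) : ℝ :=
  (q i 0 - q j 0) ^ 2 + (q i 1 - q j 1) ^ 2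

lemma sq2_nonneg (i j : Fin n) (q : Fin n → Fin 2 → ℝ) : 0 ≤ sq2 i j q :=
  add_nonneg (sq_nonneg _) (sq_nonneg _)

/-- Coordinate projection as a continuous linear map. -/
noncomputable def cp (i : Fin n) (c : Fin 2) : (Fin n → Fin 2 → ℝ) →L[ℝ] ℝ :=
  (ContinuousLinearMap.proj c : (Fin 2 → ℝ) →L[ℝ] ℝ).comp
    (ContinuousLinearMap.proj i : (Fin n → Fin 2 → ℝ) →L[ℝ] (Fin 2 → ℝ))

@[simp] lemma cp_apply (i : Fin n) (c : Fin 2) (q : Fin n → Fin 2 → ℝ) : cp i c q = q i c := by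
  simp [cp]

/-- Derivative of `sq2 i j` at `q`. -/
noncomputable def DS (i j : Fin n) (q : Fin n → Fin 2 → ℝ) : (Fin n → Fin 2 → ℝ) →L[ℝ] ℝ :=
  (2 * (q i 0 - q j 0)) • (cp i 0 - cp j 0) + (2 * (q i 1 - q j 1)) • (cp i 1 - cp j 1)

@[simp] lemma DS_apply (i j : Fin n) (q v : Fin n → Fin 2 → ℝ) :
    DS i j q v = 2 * (q i 0 - q j 0) * (v i 0 - v j 0) + 2 * (q i 1 - q j 1) * (v i 1 - v j 1) := by
  first
  | (simp [DS]; ring)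
  | simp [DS]

lemma hasFDerivAt_sq2 (i j : Fin n) (q : Fin n → Fin 2 → ℝ) :
    HasFDerivAt (sq2 i j) (DS i j q) q := by
  have h0 : HasFDerivAt (fun q : Fin n → Fin 2 → ℝ => cp i 0 q - cp j 0 q) (cp i 0 - cp j 0) q :=
    ((cp i 0).hasFDerivAt.sub (cp j 0).hasFDerivAt)
  have h1 : HasFDerivAt (fun q : Fin n → Fin 2 → ℝ => cp i 1 q - cp j 1 q) (cp i 1 - cp j 1) q :=
    ((cp i 1).hasFDerivAt.sub (cp j 1).hasFDerivAt)
  have h := ((h0.mul h0).add (h1.mul h1))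
  refine (h.congr_fderiv ?_).congr_of_eventuallyEq (Filter.Eventually.of_forall fun q' => ?_)
  · refine ContinuousLinearMap.ext fun v => ?_
    simp only [DS_apply, ContinuousLinearMap.add_apply, ContinuousLinearMap.smul_apply,
      ContinuousLinearMap.sub_apply, cp_apply, smul_eq_mul]
    ring
  · simp only [sq2, Pi.add_apply, Pi.mul_apply, cp_apply]
    ring

lemma sq2_pos {i j : Fin n} {q : Fin n → Fin 2 → ℝ} (h : q i ≠ q j) : 0 < sq2 i j q := by
  have h' : q i 0 ≠ q j 0 ∨ q i 1 ≠ q j 1 := by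
    by_contra hc
    push_neg at hc
    exact h (funext fun b => by fin_cases b <;> simp [hc.1, hc.2])
  rcases h' with h' | h'
  · have := pow_two_pos_of_ne_zero (sub_ne_zero.mpr h')
    have := sq_nonneg (q i 1 - q j 1)
    unfold sq2; linarith
  · have := pow_two_pos_of_ne_zero (sub_ne_zero.mpr h')
    have := sq_nonneg (q i 0 - q j 0)
    unfold sq2; linarith

/-- The collision-free set. -/
def goodSet (n : ℕ) : Set (Fin n → Fin 2 → ℝ) := {q | ∀ i j : Fin n, i ≠ j → q i ≠ q j}

lemma isOpen_goodSet : IsOpen (goodSet n) := by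
  have : goodSet n = ⋂ p : Fin n × Fin n, {q : Fin n → Fin 2 → ℝ | p.1 ≠ p.2 → q p.1 ≠ q p.2} := by
    ext q
    simp only [goodSet, Set.mem_iInter, Set.mem_setOf_eq]
    constructor
    · intro h p; exact h p.1 p.2
    · intro h i j hij; exact h (i, j) hij
  rw [this]
  refine isOpen_iInter_of_finite fun p => ?_
  by_cases hp : p.1 = p.2
  · simp [hp]
  · have : {q : Fin n → Fin 2 → ℝ | p.1 ≠ p.2 → q p.1 ≠ q p.2}
        = {q : Fin n → Fin 2 → ℝ | q p.1 = q p.2}ᶜ := by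
      ext q; simp [hp]
    rw [this]
    exact (isClosed_eq (continuous_apply p.1) (continuous_apply p.2)).isOpen_compl

lemma DS_apply_basis (i j k : Fin n) (c₀ : Fin 2) (q : Fin n → Fin 2 → ℝ) :
    DS i j q (basisVec k c₀) =
      2 * (q i c₀ - q j c₀) * ((if i = k then (1:ℝ) else 0) - (if j = k then 1 else 0)) := by
  fin_cases c₀ <;> simp [DS_apply, basisVec] <;> ring

lemma basisVec_apply_same (i k : Fin n) (c₀ : Fin 2) :
    basisVec k c₀ i c₀ = (if i = k then (1:ℝ) else 0) := by
  simp [basisVec]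

/-- Key computation: the diagonal second derivative of a pairwise potential
`q ↦ ∑_{i<j} ψ i j (|q_i - q_j|²)` in the direction `basisVec k c₀`. -/
lemma second_deriv_sum (ψ ψ₁ ψ₂ : Fin n → Fin n → ℝ → ℝ)
    (hψ : ∀ i j t, 0 < t → HasDerivAt (ψ i j) (ψ₁ i j t) t)
    (hψ₁ : ∀ i j t, 0 < t → HasDerivAt (ψ₁ i j) (ψ₂ i j t) t)
    (x : Fin n → Fin 2 → ℝ) (hx : ∀ i j : Fin n, i ≠ j → x i ≠ x j) (k : Fin n) (c₀ : Fin 2) :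
    iteratedFDeriv ℝ 2 (fun q => ∑ i : Fin n, ∑ j ∈ Finset.univ.filter (fun j => i < j),
        ψ i j (sq2 i j q)) x ![basisVec k c₀, basisVec k c₀] =
      ∑ i : Fin n, ∑ j ∈ Finset.univ.filter (fun j => i < j),
        ((if i = k then (1:ℝ) else 0) + (if j = k then 1 else 0)) *
          (2 * ψ₁ i j (sq2 i j x) + 4 * (x i c₀ - x j c₀) ^ 2 * ψ₂ i j (sq2 i j x)) := by
  classical
  set e := basisVec k c₀ with he
  set σ : Fin n → Fin n → ℝ :=
    fun i j => (if i = k then (1:ℝ) else 0) - (if j = k then 1 else 0) with hσ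
  set V : (Fin n → Fin 2 → ℝ) → ℝ := fun q => ∑ i : Fin n,
    ∑ j ∈ Finset.univ.filter (fun j => i < j), ψ i j (sq2 i j q) with hVdef
  set Φ : (Fin n → Fin 2 → ℝ) → ((Fin n → Fin 2 → ℝ) →L[ℝ] ℝ) := fun q =>
    ∑ i : Fin n, ∑ j ∈ Finset.univ.filter (fun j => i < j),
      ψ₁ i j (sq2 i j q) • DS i j q with hΦdef
  have hxO : x ∈ goodSet n := hx
  have hnhds : goodSet n ∈ 𝓝 x := isOpen_goodSet.mem_nhds hxO
  have hpos : ∀ q ∈ goodSet n, ∀ i j : Fin n, i < j → 0 < sq2 i j q := fun q hq i j hij =>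
    sq2_pos (hq i j (ne_of_lt hij))
  have hVd : ∀ q ∈ goodSet n, HasFDerivAt V (Φ q) q := by
    intro q hq
    apply HasFDerivAt.fun_sum
    intro i _
    apply HasFDerivAt.fun_sum
    intro j hj
    have hij : i < j := (Finset.mem_filter.mp hj).2
    exact (hψ i j _ (hpos q hq i j hij)).comp_hasFDerivAt q (hasFDerivAt_sq2 i j q)
  have hfd : fderiv ℝ V =ᶠ[𝓝 x] Φ :=
    Filter.eventually_of_mem hnhds fun q hq => (hVd q hq).fderiv
  have hΦdiff : DifferentiableAt ℝ Φ x := by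
    apply DifferentiableAt.fun_sum
    intro i _
    apply DifferentiableAt.fun_sum
    intro j hj
    have hij : i < j := (Finset.mem_filter.mp hj).2
    have h1 : DifferentiableAt ℝ (fun q => ψ₁ i j (sq2 i j q)) x :=
      ((hψ₁ i j _ (hpos x hxO i j hij)).comp_hasFDerivAt x (hasFDerivAt_sq2 i j x)).differentiableAt
    have h2 : DifferentiableAt ℝ (fun q => DS i j q) x := by
      apply DifferentiableAt.add
      · apply DifferentiableAt.smul_const
        exact (DifferentiableAt.sub ((cp i 0).differentiableAt) ((cp j 0).differentiableAt)).const_mul 2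
      · apply DifferentiableAt.smul_const
        exact (DifferentiableAt.sub ((cp i 1).differentiableAt) ((cp j 1).differentiableAt)).const_mul 2
    exact h1.smul h2
  have hfdiff : DifferentiableAt ℝ (fderiv ℝ V) x := hΦdiff.congr_of_eventuallyEq hfd
  have happly : HasFDerivAt (fun q => fderiv ℝ V q e)
      ((ContinuousLinearMap.apply ℝ ℝ e).comp (fderiv ℝ (fderiv ℝ V) x)) x :=
    (ContinuousLinearMap.apply ℝ ℝ e).hasFDerivAt.comp x hfdiff.hasFDerivAt
  set G : (Fin n → Fin 2 → ℝ) → ℝ := fun q => ∑ i : Fin n,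
    ∑ j ∈ Finset.univ.filter (fun j => i < j),
      ψ₁ i j (sq2 i j q) * (2 * (q i c₀ - q j c₀) * σ i j) with hGdef
  have hGfd : (fun q => fderiv ℝ V q e) =ᶠ[𝓝 x] G := by
    refine Filter.eventually_of_mem hnhds fun q hq => ?_
    show fderiv ℝ V q e = G q
    rw [(hVd q hq).fderiv]
    simp only [hΦdef, hGdef, ContinuousLinearMap.sum_apply, ContinuousLinearMap.smul_apply,
      smul_eq_mul]
    refine Finset.sum_congr rfl fun i _ => Finset.sum_congr rfl fun j _ => ?_
    rw [he, DS_apply_basis]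
  set Ψ : (Fin n → Fin 2 → ℝ) →L[ℝ] ℝ := ∑ i : Fin n,
    ∑ j ∈ Finset.univ.filter (fun j => i < j),
      (ψ₁ i j (sq2 i j x) • ((2 * σ i j) • (cp i c₀ - cp j c₀)) +
        (2 * (x i c₀ - x j c₀) * σ i j) • (ψ₂ i j (sq2 i j x) • DS i j x)) with hΨdef
  have hG : HasFDerivAt G Ψ x := by
    apply HasFDerivAt.fun_sum
    intro i _
    apply HasFDerivAt.fun_sum
    intro j hj
    have hij : i < j := (Finset.mem_filter.mp hj).2
    have hc : HasFDerivAt (fun q => ψ₁ i j (sq2 i j q)) (ψ₂ i j (sq2 i j x) • DS i j x) x :=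
      (hψ₁ i j _ (hpos x hxO i j hij)).comp_hasFDerivAt x (hasFDerivAt_sq2 i j x)
    have hd0 : HasFDerivAt (fun q : Fin n → Fin 2 → ℝ => (2 * σ i j) * (cp i c₀ q - cp j c₀ q))
        ((2 * σ i j) • (cp i c₀ - cp j c₀)) x :=
      (((cp i c₀).hasFDerivAt.sub (cp j c₀).hasFDerivAt)).const_mul (2 * σ i j)
    have hd : HasFDerivAt (fun q : Fin n → Fin 2 → ℝ => 2 * (q i c₀ - q j c₀) * σ i j)
        ((2 * σ i j) • (cp i c₀ - cp j c₀)) x := by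
      refine hd0.congr_of_eventuallyEq (Filter.Eventually.of_forall fun q => ?_)
      simp
      ring
    exact hc.mul hd
  have hΨe : Ψ e = ∑ i : Fin n, ∑ j ∈ Finset.univ.filter (fun j => i < j),
      ((if i = k then (1:ℝ) else 0) + (if j = k then 1 else 0)) *
        (2 * ψ₁ i j (sq2 i j x) + 4 * (x i c₀ - x j c₀) ^ 2 * ψ₂ i j (sq2 i j x)) := by
    rw [hΨdef]
    simp only [ContinuousLinearMap.sum_apply]
    refine Finset.sum_congr rfl fun i _ => Finset.sum_congr rfl fun j hj => ?_
    have hij : i ≠ j := ne_of_lt (Finset.mem_filter.mp hj).2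
    simp only [ContinuousLinearMap.add_apply, ContinuousLinearMap.smul_apply,
      ContinuousLinearMap.sub_apply, cp_apply, smul_eq_mul, he, DS_apply_basis,
      basisVec_apply_same]
    have expand : σ i j = (if i = k then (1:ℝ) else 0) - (if j = k then 1 else 0) := rfl
    rw [expand]
    rcases eq_or_ne i k with hik | hik <;> rcases eq_or_ne j k with hjk | hjk
    · exact absurd (hik.trans hjk.symm) hij
    · simp only [if_pos hik, if_neg hjk]; ring
    · simp only [if_neg hik, if_pos hjk]; ring
    · simp only [if_neg hik, if_neg hjk]; ring
  calc iteratedFDeriv ℝ 2 V x ![e, e]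
      = fderiv ℝ (fderiv ℝ V) x e e := by
        rw [iteratedFDeriv_two_apply]
        simp
    _ = fderiv ℝ (fun q => fderiv ℝ V q e) x e := by
        rw [happly.fderiv]
        rfl
    _ = fderiv ℝ G x e := by rw [hGfd.fderiv_eq]
    _ = Ψ e := by rw [hG.fderiv]
    _ = _ := hΨe

/-- Rearrangement of the weighted trace sum. -/
lemma trace_sum (m : Fin n → ℝ) (W : Fin n → Fin n → Fin 2 → ℝ) :
    (∑ k : Fin n, ∑ c : Fin 2, (m k)⁻¹ *
      (∑ i : Fin n, ∑ j ∈ Finset.univ.filter (fun j => i < j),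
        ((if i = k then (1:ℝ) else 0) + (if j = k then 1 else 0)) * W i j c))
    = ∑ i : Fin n, ∑ j ∈ Finset.univ.filter (fun j => i < j),
        ((m i)⁻¹ + (m j)⁻¹) * (W i j 0 + W i j 1) := by
  classical
  calc (∑ k : Fin n, ∑ c : Fin 2, (m k)⁻¹ *
      (∑ i : Fin n, ∑ j ∈ Finset.univ.filter (fun j => i < j),
        ((if i = k then (1:ℝ) else 0) + (if j = k then 1 else 0)) * W i j c))
      = ∑ k : Fin n, ∑ c : Fin 2, ∑ i : Fin n, ∑ j ∈ Finset.univ.filter (fun j => i < j),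
          ((if i = k then (m k)⁻¹ * W i j c else 0) + (if j = k then (m k)⁻¹ * W i j c else 0)) := by
        refine Finset.sum_congr rfl fun k _ => Finset.sum_congr rfl fun c _ => ?_
        rw [Finset.mul_sum]
        refine Finset.sum_congr rfl fun i _ => ?_
        rw [Finset.mul_sum]
        refine Finset.sum_congr rfl fun j _ => ?_
        split_ifs <;> ring
    _ = ∑ c : Fin 2, ∑ k : Fin n, ∑ i : Fin n, ∑ j ∈ Finset.univ.filter (fun j => i < j),
          ((if i = k then (m k)⁻¹ * W i j c else 0) + (if j = k then (m k)⁻¹ * W i j c else 0)) :=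
        Finset.sum_comm
    _ = ∑ c : Fin 2, ∑ i : Fin n, ∑ j ∈ Finset.univ.filter (fun j => i < j), ∑ k : Fin n,
          ((if i = k then (m k)⁻¹ * W i j c else 0) + (if j = k then (m k)⁻¹ * W i j c else 0)) := by
        refine Finset.sum_congr rfl fun c _ => ?_
        rw [Finset.sum_comm]
        exact Finset.sum_congr rfl fun i _ => Finset.sum_comm
    _ = ∑ c : Fin 2, ∑ i : Fin n, ∑ j ∈ Finset.univ.filter (fun j => i < j),
          ((m i)⁻¹ * W i j c + (m j)⁻¹ * W i j c) := by
        refine Finset.sum_congr rfl fun c _ => Finset.sum_congr rfl fun i _ =>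
          Finset.sum_congr rfl fun j _ => ?_
        rw [Finset.sum_add_distrib, Finset.sum_ite_eq, Finset.sum_ite_eq]
        simp
    _ = ∑ i : Fin n, ∑ j ∈ Finset.univ.filter (fun j => i < j), ∑ c : Fin 2,
          ((m i)⁻¹ * W i j c + (m j)⁻¹ * W i j c) := by
        rw [Finset.sum_comm]
        exact Finset.sum_congr rfl fun i _ => Finset.sum_comm
    _ = _ := by
        refine Finset.sum_congr rfl fun i _ => Finset.sum_congr rfl fun j _ => ?_
        rw [Fin.sum_univ_two]
        ring

lemma Ualpha_eq (m : Fin n → ℝ) (α : ℝ) :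
    Ualpha m α = fun q => ∑ i : Fin n, ∑ j ∈ Finset.univ.filter (fun j => i < j),
      (m i * m j) * (sq2 i j q) ^ (-(α/2)) := by
  funext q
  unfold Ualpha
  refine Finset.sum_congr rfl fun i _ => Finset.sum_congr rfl fun j _ => ?_
  have hs0 : (0:ℝ) ≤ sq2 i j q := sq2_nonneg i j q
  have hd : dist2 q i j = Real.sqrt (sq2 i j q) := rfl
  rw [hd, show Real.rpow (Real.sqrt (sq2 i j q)) α = (Real.sqrt (sq2 i j q)) ^ α from rfl,
    Real.sqrt_eq_rpow, ← Real.rpow_mul hs0, div_eq_mul_inv, ← Real.rpow_neg hs0]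
  congr 1
  ring_nf

lemma Ulog_eq (m : Fin n → ℝ) :
    Ulog m = fun q => ∑ i : Fin n, ∑ j ∈ Finset.univ.filter (fun j => i < j),
      (-(m i * m j)/2) * Real.log (sq2 i j q) := by
  funext q
  unfold Ulog
  rw [← Finset.sum_neg_distrib]
  refine Finset.sum_congr rfl fun i _ => ?_
  rw [← Finset.sum_neg_distrib]
  refine Finset.sum_congr rfl fun j _ => ?_
  have hs0 : (0:ℝ) ≤ sq2 i j q := sq2_nonneg i j q
  have hd : dist2 q i j = Real.sqrt (sq2 i j q) := rfl
  rw [hd, Real.log_sqrt hs0]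
  ring

end NBodyTrace

open NBodyTrace in
/-- `tr(M⁻¹ D²U_α(x̄)) = α² ∑_{i<j} (m_i + m_j)/|x̄_i - x̄_j|^{α+2}` and
`tr(M⁻¹ D²U_log(x̄)) = 0`, where the trace is computed as the sum of the diagonal second
derivatives weighted by the inverse masses. -/
theorem trace_inv_mass_hessian {n : ℕ} (m : Fin n → ℝ) (hm : ∀ i, 0 < m i)
    (α : ℝ) (hα : 0 < α) (hα2 : α < 2)
    (x : Fin n → Fin 2 → ℝ) (hx : ∀ i j, i ≠ j → x i ≠ x j) :
    (∑ i : Fin n, ∑ c : Fin 2, (m i)⁻¹ *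
        iteratedFDeriv ℝ 2 (Ualpha m α) x ![basisVec i c, basisVec i c] =
      α ^ 2 * ∑ i : Fin n, ∑ j ∈ Finset.univ.filter (fun j => i < j),
        (m i + m j) / Real.rpow (dist2 x i j) (α + 2)) ∧
    (∑ i : Fin n, ∑ c : Fin 2, (m i)⁻¹ *
        iteratedFDeriv ℝ 2 (Ulog m) x ![basisVec i c, basisVec i c] = 0) := by
  have hpos : ∀ i j : Fin n, i < j → 0 < sq2 i j x := fun i j hij =>
    sq2_pos (hx i j (ne_of_lt hij))
  constructor
  · -- α-homogeneous case
    set β : ℝ := -(α/2) with hβ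
    have key : ∀ (k : Fin n) (c₀ : Fin 2),
        iteratedFDeriv ℝ 2 (Ualpha m α) x ![basisVec k c₀, basisVec k c₀] =
        ∑ i : Fin n, ∑ j ∈ Finset.univ.filter (fun j => i < j),
          ((if i = k then (1:ℝ) else 0) + (if j = k then 1 else 0)) *
            (2 * ((m i * m j) * (β * (sq2 i j x) ^ (β - 1))) +
              4 * (x i c₀ - x j c₀) ^ 2 *
                ((m i * m j) * (β * ((β - 1) * (sq2 i j x) ^ (β - 1 - 1))))) := by
      intro k c₀
      rw [Ualpha_eq m α, ← hβ]
      exact second_deriv_sum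
        (fun i j t => (m i * m j) * t ^ β)
        (fun i j t => (m i * m j) * (β * t ^ (β - 1)))
        (fun i j t => (m i * m j) * (β * ((β - 1) * t ^ (β - 1 - 1))))
        (fun i j t ht => (Real.hasDerivAt_rpow_const (Or.inl ht.ne')).const_mul (m i * m j))
        (fun i j t ht =>
          (((Real.hasDerivAt_rpow_const (p := β - 1) (Or.inl ht.ne')).const_mul β).const_mul
            (m i * m j)))
        x hx k c₀
    calc (∑ i : Fin n, ∑ c : Fin 2, (m i)⁻¹ *
          iteratedFDeriv ℝ 2 (Ualpha m α) x ![basisVec i c, basisVec i c])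
        = ∑ k : Fin n, ∑ c : Fin 2, (m k)⁻¹ *
            (∑ i : Fin n, ∑ j ∈ Finset.univ.filter (fun j => i < j),
              ((if i = k then (1:ℝ) else 0) + (if j = k then 1 else 0)) *
                (2 * ((m i * m j) * (β * (sq2 i j x) ^ (β - 1))) +
                  4 * (x i c - x j c) ^ 2 *
                    ((m i * m j) * (β * ((β - 1) * (sq2 i j x) ^ (β - 1 - 1)))))) := by
          exact Finset.sum_congr rfl fun k _ => Finset.sum_congr rfl fun c _ => by rw [key k c]
      _ = ∑ i : Fin n, ∑ j ∈ Finset.univ.filter (fun j => i < j),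
            ((m i)⁻¹ + (m j)⁻¹) *
              ((2 * ((m i * m j) * (β * (sq2 i j x) ^ (β - 1))) +
                  4 * (x i 0 - x j 0) ^ 2 *
                    ((m i * m j) * (β * ((β - 1) * (sq2 i j x) ^ (β - 1 - 1))))) +
               (2 * ((m i * m j) * (β * (sq2 i j x) ^ (β - 1))) +
                  4 * (x i 1 - x j 1) ^ 2 *
                    ((m i * m j) * (β * ((β - 1) * (sq2 i j x) ^ (β - 1 - 1)))))) :=
          trace_sum m _
      _ = α ^ 2 * ∑ i : Fin n, ∑ j ∈ Finset.univ.filter (fun j => i < j),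
            (m i + m j) / Real.rpow (dist2 x i j) (α + 2) := by
          rw [Finset.mul_sum]
          refine Finset.sum_congr rfl fun i _ => ?_
          rw [Finset.mul_sum]
          refine Finset.sum_congr rfl fun j hj => ?_
          have hij : i < j := (Finset.mem_filter.mp hj).2
          have hs : 0 < sq2 i j x := hpos i j hij
          have hs0 : (0:ℝ) ≤ sq2 i j x := hs.le
          -- rewrite the distance power
          have hdist : Real.rpow (dist2 x i j) (α + 2) = (sq2 i j x) ^ ((α + 2)/2) := by
            have hd : dist2 x i j = Real.sqrt (sq2 i j x) := rfl
            rw [hd, show Real.rpow (Real.sqrt (sq2 i j x)) (α + 2)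
                = (Real.sqrt (sq2 i j x)) ^ (α + 2) from rfl,
              Real.sqrt_eq_rpow, ← Real.rpow_mul hs0]
            congr 1
            ring
          -- power identities
          have hsum : (x i 0 - x j 0) ^ 2 + (x i 1 - x j 1) ^ 2 = sq2 i j x := rfl
          have hstep : (sq2 i j x) * (sq2 i j x) ^ (β - 1 - 1) = (sq2 i j x) ^ (β - 1) := by
            have h1 : (sq2 i j x) ^ (β - 1) = (sq2 i j x) ^ (β - 1 - 1) * (sq2 i j x) ^ (1:ℝ) := by
              rw [← Real.rpow_add hs]
              congr 1
              ring
            rw [h1, Real.rpow_one]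
            ring
          have hinv : (sq2 i j x) ^ (β - 1) = ((sq2 i j x) ^ ((α + 2)/2))⁻¹ := by
            rw [← Real.rpow_neg hs0]
            congr 1
            rw [hβ]
            ring
          have hne : (sq2 i j x) ^ ((α + 2)/2) ≠ 0 := (Real.rpow_pos_of_pos hs _).ne'
          rw [hdist]
          -- final algebra
          have hmi : m i ≠ 0 := (hm i).ne'
          have hmj : m j ≠ 0 := (hm j).ne'
          have expand : ((m i)⁻¹ + (m j)⁻¹) *
              ((2 * ((m i * m j) * (β * (sq2 i j x) ^ (β - 1))) +
                  4 * (x i 0 - x j 0) ^ 2 *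
                    ((m i * m j) * (β * ((β - 1) * (sq2 i j x) ^ (β - 1 - 1))))) +
               (2 * ((m i * m j) * (β * (sq2 i j x) ^ (β - 1))) +
                  4 * (x i 1 - x j 1) ^ 2 *
                    ((m i * m j) * (β * ((β - 1) * (sq2 i j x) ^ (β - 1 - 1)))))) =
              ((m i)⁻¹ + (m j)⁻¹) * (m i * m j) *
                (4 * β * (sq2 i j x) ^ (β - 1) +
                  4 * β * (β - 1) * ((sq2 i j x) * (sq2 i j x) ^ (β - 1 - 1))) := by
            rw [← hsum]
            ring
          rw [expand, hstep, hinv]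
          have hβα : 4 * β * ((sq2 i j x) ^ ((α + 2)/2))⁻¹ +
              4 * β * (β - 1) * ((sq2 i j x) ^ ((α + 2)/2))⁻¹ =
              α ^ 2 * ((sq2 i j x) ^ ((α + 2)/2))⁻¹ := by
            rw [hβ]
            ring
          field_simp
          ring
      _ = _ := rfl
  · -- logarithmic case
    have key : ∀ (k : Fin n) (c₀ : Fin 2),
        iteratedFDeriv ℝ 2 (Ulog m) x ![basisVec k c₀, basisVec k c₀] =
        ∑ i : Fin n, ∑ j ∈ Finset.univ.filter (fun j => i < j),
          ((if i = k then (1:ℝ) else 0) + (if j = k then 1 else 0)) *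
            (2 * ((-(m i * m j)/2) * (sq2 i j x)⁻¹) +
              4 * (x i c₀ - x j c₀) ^ 2 * ((-(m i * m j)/2) * (-((sq2 i j x) ^ (2:ℕ))⁻¹))) := by
      intro k c₀
      rw [Ulog_eq m]
      exact second_deriv_sum
        (fun i j t => (-(m i * m j)/2) * Real.log t)
        (fun i j t => (-(m i * m j)/2) * t⁻¹)
        (fun i j t => (-(m i * m j)/2) * (-(t ^ (2:ℕ))⁻¹))
        (fun i j t ht => (Real.hasDerivAt_log ht.ne').const_mul (-(m i * m j)/2))
        (fun i j t ht => (hasDerivAt_inv ht.ne').const_mul (-(m i * m j)/2))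
        x hx k c₀
    calc (∑ i : Fin n, ∑ c : Fin 2, (m i)⁻¹ *
          iteratedFDeriv ℝ 2 (Ulog m) x ![basisVec i c, basisVec i c])
        = ∑ k : Fin n, ∑ c : Fin 2, (m k)⁻¹ *
            (∑ i : Fin n, ∑ j ∈ Finset.univ.filter (fun j => i < j),
              ((if i = k then (1:ℝ) else 0) + (if j = k then 1 else 0)) *
                (2 * ((-(m i * m j)/2) * (sq2 i j x)⁻¹) +
                  4 * (x i c - x j c) ^ 2 *
                    ((-(m i * m j)/2) * (-((sq2 i j x) ^ (2:ℕ))⁻¹)))) := by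
          exact Finset.sum_congr rfl fun k _ => Finset.sum_congr rfl fun c _ => by rw [key k c]
      _ = ∑ i : Fin n, ∑ j ∈ Finset.univ.filter (fun j => i < j),
            ((m i)⁻¹ + (m j)⁻¹) *
              ((2 * ((-(m i * m j)/2) * (sq2 i j x)⁻¹) +
                  4 * (x i 0 - x j 0) ^ 2 * ((-(m i * m j)/2) * (-((sq2 i j x) ^ (2:ℕ))⁻¹))) +
               (2 * ((-(m i * m j)/2) * (sq2 i j x)⁻¹) +
                  4 * (x i 1 - x j 1) ^ 2 * ((-(m i * m j)/2) * (-((sq2 i j x) ^ (2:ℕ))⁻¹)))) :=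
          trace_sum m _
      _ = 0 := by
          refine Finset.sum_eq_zero fun i _ => Finset.sum_eq_zero fun j hj => ?_
          have hij : i < j := (Finset.mem_filter.mp hj).2
          have hne : sq2 i j x ≠ 0 := (hpos i j hij).ne'
          apply mul_eq_zero_of_right
          have hsub : (x i 0 - x j 0) ^ 2 = sq2 i j x - (x i 1 - x j 1) ^ 2 := by
            unfold sq2; ring
          rw [hsub]
          field_simp
          ring
end
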